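/- Let F > 0 be a constant external force on the segment [0, L]. Then for all sufficiently large N there exists a unique fixed configuration (x_1, x_2, ..., x_N) on the segment with x_1 = 0 and x_N = L. -/

import Mathlib

open Real Filter Set Asymptotics

/-- The repulsion force `f(r) = r^{-a}`. -/
noncomputable def fpow (a r : ℝ) : ℝ := r ^ (-a)

/-- The clockwise gaps of a configuration `x 1 < ... < x N` on the circle of
circumference `L`: `Δ k = x (k+1) - x k` for `1 ≤ k ≤ N-1` and `Δ N = L - x N + x 1`. -/
def cgap (L : ℝ) (N : ℕ) (x : ℕ → ℝ) (k : ℕ) : ℝ :=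
  if k < N then x (k + 1) - x k else L - x N + x 1

/-- A configuration of `N` particles on the circle of circumference `L`,
variant with `0 ≤ x 1 < ... < x N < L`. -/
def CircleConfigA (L : ℝ) (N : ℕ) (x : ℕ → ℝ) : Prop :=
  0 ≤ x 1 ∧ (∀ k, 1 ≤ k → k < N → x k < x (k + 1)) ∧ x N < L

/-- A fixed (critical) configuration on the circle (variant `0 ≤ x 1`, `x N < L`):
`f(Δ (k-1)) + F (x k) - f(Δ k) = 0` for `k = 1, ..., N`, with `Δ 0 = Δ N`. -/
def CircleFixedA (a L : ℝ) (F : ℝ → ℝ) (N : ℕ) (x : ℕ → ℝ) : Prop :=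
  CircleConfigA L N x ∧
  ∀ k, 1 ≤ k → k ≤ N →
    fpow a (cgap L N x (if k = 1 then N else k - 1)) + F (x k) - fpow a (cgap L N x k) = 0

/-- A configuration of `N` particles on the circle of circumference `L`,
variant with `0 < x 1 < ... < x N ≤ L`. -/
def CircleConfigB (L : ℝ) (N : ℕ) (x : ℕ → ℝ) : Prop :=
  0 < x 1 ∧ (∀ k, 1 ≤ k → k < N → x k < x (k + 1)) ∧ x N ≤ L

/-- A fixed (critical) configuration on the circle (variant `0 < x 1`, `x N ≤ L`):
`f(Δ (k-1)) + F (x k) - f(Δ k) = 0` for `k = 1, ..., N`, with `Δ 0 = Δ N`. -/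
def CircleFixedB (a L : ℝ) (F : ℝ → ℝ) (N : ℕ) (x : ℕ → ℝ) : Prop :=
  CircleConfigB L N x ∧
  ∀ k, 1 ≤ k → k ≤ N →
    fpow a (cgap L N x (if k = 1 then N else k - 1)) + F (x k) - fpow a (cgap L N x k) = 0

/-- A fixed configuration of `N` particles on the segment `[0, L]` with constant
force `F`, completely inelastic boundary conditions, and `x 1 = 0`, `x N = L`. -/
def SegmentFixed (a L F : ℝ) (N : ℕ) (x : ℕ → ℝ) : Prop :=
  x 1 = 0 ∧ x N = L ∧ (∀ k, 1 ≤ k → k < N → x k < x (k + 1)) ∧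
  (∀ k, 2 ≤ k → k ≤ N - 1 → fpow a (x k - x (k - 1)) + F - fpow a (x (k + 1) - x k) = 0) ∧
  F - fpow a (x 2) ≤ 0 ∧ 0 ≤ F + fpow a (L - x (N - 1))

/-- The gap sequence: `gapf a F t j = (t + j F)^{-1/a}`. -/
noncomputable def gapf (a F t : ℝ) (j : ℕ) : ℝ := (t + j * F) ^ (-(1/a))

/-- Total length of the first `M` gaps. -/
noncomputable def Ssum (a F : ℝ) (M : ℕ) (t : ℝ) : ℝ := ∑ j ∈ Finset.range M, gapf a F t j

lemma base_pos {F t : ℝ} (hF : 0 < F) (ht : 0 < t) (j : ℕ) : 0 < t + j * F := by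
  positivity

lemma gapf_pos {a F t : ℝ} (hF : 0 < F) (ht : 0 < t) (j : ℕ) : 0 < gapf a F t j :=
  Real.rpow_pos_of_pos (base_pos hF ht j) _

lemma fpow_gapf {a F t : ℝ} (ha : 1 < a) (hF : 0 < F) (ht : 0 < t) (j : ℕ) :
    fpow a (gapf a F t j) = t + j * F := by
  have ha0 : a ≠ 0 := by positivity
  have h := base_pos hF ht j
  rw [fpow, gapf, ← Real.rpow_mul h.le]
  have : -(1/a) * -a = 1 := by field_simp
  rw [this, Real.rpow_one]

lemma rpow_fpow {a d : ℝ} (ha : 1 < a) (hd : 0 < d) : (fpow a d) ^ (-(1/a)) = d := by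
  have ha0 : a ≠ 0 := by positivity
  rw [fpow, ← Real.rpow_mul hd.le]
  have : -a * -(1/a) = 1 := by field_simp
  rw [this, Real.rpow_one]

lemma Ssum_strictAnti {a F : ℝ} (ha : 1 < a) (hF : 0 < F) {M : ℕ} (hM : 0 < M) :
    StrictAntiOn (Ssum a F M) (Ioi 0) := by
  intro t1 h1 t2 h2 h12
  have he : -(1/a) < 0 := by
    have : (0:ℝ) < 1/a := by positivity
    linarith
  apply Finset.sum_lt_sum_of_nonempty (Finset.nonempty_range_iff.mpr (by omega))
  intro j _
  exact Real.rpow_lt_rpow_of_neg (base_pos hF (mem_Ioi.mp h1) j) (by linarith) he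

lemma Ssum_continuousOn {a F : ℝ} (hF : 0 < F) (M : ℕ) :
    ContinuousOn (Ssum a F M) (Ici F) := by
  apply continuousOn_finset_sum
  intro j _
  apply ContinuousOn.rpow_const ((continuous_id.add continuous_const).continuousOn)
  intro t ht
  left
  have h1 : F ≤ t := ht
  have h2 : (0:ℝ) ≤ (j:ℝ) * F := by positivity
  have : 0 < t + j * F := by linarith
  exact ne_of_gt this

lemma tendsto_SsumF {a F : ℝ} (ha : 1 < a) (hF : 0 < F) :
    Tendsto (fun M => Ssum a F M F) atTop atTop := by
  have hnn : ∀ j : ℕ, 0 ≤ gapf a F F j := fun j => (gapf_pos (a := a) hF hF j).le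
  have hns : ¬ Summable (fun j : ℕ => gapf a F F j) := by
    intro hsum
    have hFe : (0:ℝ) < F ^ (-(1/a)) := Real.rpow_pos_of_pos hF _
    have heq : ∀ j : ℕ, gapf a F F j = ((j:ℝ) + 1) ^ (-(1/a)) * F ^ (-(1/a)) := by
      intro j
      rw [gapf, show F + (j:ℝ) * F = ((j:ℝ) + 1) * F by ring,
        Real.mul_rpow (by positivity) hF.le]
    have hsum2 : Summable (fun j : ℕ => ((j:ℝ) + 1) ^ (-(1/a))) := by
      have h1 : Summable (fun j : ℕ => (((j:ℝ) + 1) ^ (-(1/a)) * F ^ (-(1/a))) *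
          (F ^ (-(1/a)))⁻¹) := by
        apply Summable.mul_right
        have : (fun j : ℕ => gapf a F F j) = fun j : ℕ => ((j:ℝ) + 1) ^ (-(1/a)) * F ^ (-(1/a)) :=
          funext heq
        rwa [this] at hsum
      simp only [mul_assoc, mul_inv_cancel₀ (ne_of_gt hFe), mul_one] at h1
      exact h1
    have hsum3 : Summable (fun n : ℕ => ((n:ℝ)) ^ (-(1/a))) := by
      rw [← summable_nat_add_iff 1]
      simpa [Nat.cast_add] using hsum2
    rw [Real.summable_nat_rpow] at hsum3
    have : (1:ℝ) / a < 1 := by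
      rw [div_lt_one (by positivity)]; exact ha
    linarith
  exact (not_summable_iff_tendsto_nat_atTop_of_nonneg hnn).mp hns

/-- For a constant force `F > 0` on the segment `[0, L]` and all sufficiently
large `N`, there exists a unique fixed configuration with `x 1 = 0` and `x N = L`. -/
theorem segment_existence_uniqueness (a L F : ℝ) (ha : 1 < a) (hL : 0 < L) (hF : 0 < F) :
    ∃ N₀ : ℕ, ∀ N ≥ N₀, ∃ x : ℕ → ℝ, SegmentFixed a L F N x ∧
      ∀ x' : ℕ → ℝ, SegmentFixed a L F N x' → ∀ k, 1 ≤ k → k ≤ N → x' k = x k := by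
  have ha0 : (0:ℝ) < a := by linarith
  have he : -(1/a) < 0 := by
    have : (0:ℝ) < 1/a := by positivity
    linarith
  obtain ⟨M₀, hM₀⟩ := eventually_atTop.mp ((tendsto_SsumF ha hF).eventually_ge_atTop L)
  refine ⟨M₀ + 2, ?_⟩
  intro N hN
  set M := N - 1 with hMdef
  have hM1 : 1 ≤ M := by omega
  have hMN : M + 1 = N := by omega
  have hN2 : 2 ≤ N := by omega
  have hMpos : (0:ℝ) < (M:ℝ) := by exact_mod_cast hM1
  have hSF : L ≤ Ssum a F M F := hM₀ M (by omega)
  -- the upper endpoint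
  set T := max F ((L / M) ^ (-a)) with hTdef
  have hTF : F ≤ T := le_max_left _ _
  have hT0 : 0 < T := lt_of_lt_of_le hF hTF
  have hLM : (0:ℝ) < L / M := by positivity
  have hTub : Ssum a F M T ≤ L := by
    have hTpow : T ^ (-(1/a)) ≤ L / M := by
      have h1 : T ^ (-(1/a)) ≤ ((L / M) ^ (-a)) ^ (-(1/a)) :=
        Real.rpow_le_rpow_of_nonpos (Real.rpow_pos_of_pos hLM _) (le_max_right _ _) he.le
      have h2 : ((L / M) ^ (-a)) ^ (-(1/a)) = L / M := by
        rw [← Real.rpow_mul hLM.le]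
        have ha0' : a ≠ 0 := by positivity
        have : -a * -(1/a) = 1 := by field_simp
        rw [this, Real.rpow_one]
      linarith [h2 ▸ h1]
    calc Ssum a F M T ≤ ∑ _j ∈ Finset.range M, T ^ (-(1/a)) := by
          apply Finset.sum_le_sum
          intro j _
          exact Real.rpow_le_rpow_of_nonpos hT0 (le_add_of_nonneg_right (by positivity)) he.le
      _ = (M:ℝ) * T ^ (-(1/a)) := by simp [Finset.sum_const, nsmul_eq_mul]
      _ ≤ (M:ℝ) * (L / M) := by
          exact mul_le_mul_of_nonneg_left hTpow hMpos.le
      _ = L := by field_simp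
  -- IVT gives the root t
  have hIVT := intermediate_value_Icc' hTF (((Ssum_continuousOn (a := a) hF M).mono (Icc_subset_Ici_self)))
  obtain ⟨t, htmem, hSt⟩ := hIVT ⟨hTub, hSF⟩
  have htF : F ≤ t := htmem.1
  have ht0 : 0 < t := lt_of_lt_of_le hF htF
  -- the configuration
  set x : ℕ → ℝ := fun k => ∑ j ∈ Finset.range (k - 1), gapf a F t j with hxdef
  have hx1 : x 1 = 0 := by simp [hxdef]
  have hstep : ∀ k, 1 ≤ k → x (k + 1) = x k + gapf a F t (k - 1) := by
    intro k hk
    have h1 : k + 1 - 1 = (k - 1) + 1 := by omega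
    simp only [hxdef, h1, Finset.sum_range_succ]
  have hxN : x N = L := by
    have : N - 1 = M := rfl
    simpa [hxdef, this, Ssum] using hSt
  have hinc : ∀ k, 1 ≤ k → x k < x (k + 1) := by
    intro k hk
    rw [hstep k hk]
    linarith [gapf_pos (a := a) hF ht0 (k - 1)]
  refine ⟨x, ⟨hx1, hxN, fun k hk _ => hinc k hk, ?_, ?_, ?_⟩, ?_⟩
  · -- interior equations
    intro k h2 hk
    have hk1 : 1 ≤ k - 1 := by omega
    have e1 : x k = x (k - 1) + gapf a F t (k - 2) := by
      have h := hstep (k - 1) hk1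
      rw [show k - 1 + 1 = k by omega, show k - 1 - 1 = k - 2 by omega] at h
      exact h
    have e2 : x (k + 1) = x k + gapf a F t (k - 1) := hstep k (by omega)
    have d1 : x k - x (k - 1) = gapf a F t (k - 2) := by rw [e1]; ring
    have d2 : x (k + 1) - x k = gapf a F t (k - 1) := by rw [e2]; ring
    rw [d1, d2, fpow_gapf ha hF ht0, fpow_gapf ha hF ht0]
    have hc : ((k - 1 : ℕ) : ℝ) = ((k - 2 : ℕ) : ℝ) + 1 := by
      rw [show k - 1 = (k - 2) + 1 by omega]
      push_cast; ring
    rw [hc]; ring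
  · -- left boundary
    have hx2 : x 2 = gapf a F t 0 := by simp [hxdef]
    rw [hx2, fpow_gapf ha hF ht0]
    push_cast
    linarith
  · -- right boundary
    have hNm1 : 1 ≤ N - 1 := hM1
    have e : x N = x (N - 1) + gapf a F t (N - 2) := by
      have h := hstep (N - 1) hNm1
      rw [show N - 1 + 1 = N by omega, show N - 1 - 1 = N - 2 by omega] at h
      exact h
    have hd : L - x (N - 1) = gapf a F t (N - 2) := by rw [← hxN, e]; ring
    rw [hd, fpow_gapf ha hF ht0]
    have h1 : (0:ℝ) ≤ ((N - 2 : ℕ) : ℝ) * F := by positivity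
    linarith
  · -- uniqueness
    intro x' hx'
    obtain ⟨h1', hN', hmono', heq', hb1', _⟩ := hx'
    set t' := fpow a (x' 2) with ht'def
    have hx'2pos : 0 < x' 2 := by
      have h := hmono' 1 le_rfl (by omega)
      rwa [h1'] at h
    have ht'0 : 0 < t' := Real.rpow_pos_of_pos hx'2pos _
    have ht'F : F ≤ t' := by linarith
    -- gap values
    have hgap' : ∀ k, 1 ≤ k → k ≤ M → fpow a (x' (k + 1) - x' k) = t' + ((k:ℝ) - 1) * F := by
      intro k
      induction k with
      | zero => omega
      | succ n ih =>
        intro _ hle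
        by_cases hn : n = 0
        · subst hn
          rw [h1', sub_zero]
          push_cast; ring_nf
          exact ht'def.symm
        · have hn1 : 1 ≤ n := by omega
          have hprev := ih hn1 (by omega)
          have heqk := heq' (n + 1) (by omega) (by omega)
          rw [show n + 1 - 1 = n from rfl] at heqk
          push_cast
          push_cast at hprev
          linarith
    have hgapf' : ∀ k, 1 ≤ k → k ≤ M → x' (k + 1) - x' k = gapf a F t' (k - 1) := by
      intro k hk hkM
      have hd : 0 < x' (k + 1) - x' k := sub_pos.mpr (hmono' k hk (by omega))
      have h := rpow_fpow ha hd
      rw [hgap' k hk hkM] at h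
      rw [← h, gapf]
      congr 2
      rw [Nat.cast_sub hk]
      push_cast; ring
    -- total length
    have hsum' : Ssum a F M t' = L := by
      have tel : ∑ j ∈ Finset.range M, (x' (j + 1 + 1) - x' (j + 1)) = x' (M + 1) - x' 1 :=
        Finset.sum_range_sub (fun j => x' (j + 1)) M
      rw [hMN, hN', h1', sub_zero] at tel
      rw [Ssum, ← tel]
      apply Finset.sum_congr rfl
      intro j hj
      have hj' : j < M := Finset.mem_range.mp hj
      have h := hgapf' (j + 1) (by omega) (by omega)
      rw [show j + 1 - 1 = j from rfl] at h
      exact h.symm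
    -- t' = t
    have htt : t' = t := by
      have hanti := Ssum_strictAnti ha hF (M := M) (by omega)
      exact hanti.injOn (mem_Ioi.mpr ht'0) (mem_Ioi.mpr ht0) (hsum'.trans hSt.symm)
    -- conclude
    intro k
    induction k with
    | zero => omega
    | succ n ih =>
      intro _ hle
      by_cases hn : n = 0
      · subst hn; rw [h1', hx1]
      · have hn1 : 1 ≤ n := by omega
        have hprev := ih hn1 (by omega)
        have hg := hgapf' n hn1 (by omega)
        rw [htt] at hg
        have hs := hstep n hn1
        linarith
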